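/- Single-index special case of the polynomial comparison: if E is a measurable subset of B_1(0) in R^n with H^n(E) >= A > 0, P(x) = sum_{|p| <= k} c_p x^p is a single real-valued polynomial of degree at most k, and |c_{p'}| >= delta for some multi-index p', then integral over E of |P(x)|^q dx >= C(n,k,q,A) * delta^q. -/

import Mathlib

open MeasureTheory Metric Set Filter Finset Topology

noncomputable section

abbrev Euc (n : ℕ) : Type := EuclideanSpace ℝ (Fin n)

noncomputable def Gd {Q : ℕ} {α : Type*} (d : α → α → ℝ) (a b : Fin Q → α) : ℝ :=
  ⨅ σ : Equiv.Perm (Fin Q), Real.sqrt (∑ i, d (a i) (b (σ i)) ^ 2)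

noncomputable def GG {Q m : ℕ} (a b : Fin Q → Euc m) : ℝ :=
  Gd (fun x y => ‖x - y‖) a b

/-- Multi-indices in `n` variables of total degree at most `k`. -/
abbrev MIdx (n k : ℕ) := {p : Fin n → Fin (k + 1) // ∑ i, (p i : ℕ) ≤ k}

def mdeg {n k : ℕ} (p : MIdx n k) : ℕ := ∑ i, (p.1 i : ℕ)

def pfact {n k : ℕ} (p : MIdx n k) : ℕ := ∏ t, Nat.factorial (p.1 t)

/-- Coefficient families for `Q`-valued polynomials `ℝ^n → A_Q(ℝ^m)` of degree `≤ k`. -/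
abbrev Coeffs (n m Q k : ℕ) := Fin Q → Fin m → MIdx n k → ℝ

/-- Evaluation of the `Q`-valued polynomial with coefficients `a`, centred at `x0`:
`P^{i,j}(x) = ∑_{|p| ≤ k} (a^{i,j}_p / p!) (x - x0)^p`. -/
noncomputable def evalQ {n m Q k : ℕ} (x0 : Euc n) (a : Coeffs n m Q k) (x : Euc n) :
    Fin Q → Euc m :=
  fun i => (WithLp.equiv 2 (Fin m → ℝ)).symm
    fun j => ∑ p : MIdx n k, (a i j p / (pfact p : ℝ)) * ∏ t, (x t - x0 t) ^ ((p.1 t : ℕ))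

/-- The `G`-distance between two unordered tuples of coefficient vectors,
restricted to multi-indices in `S` (the same permutation is used for all
coefficients of a given sheet). -/
noncomputable def Gcoef {n m Q k : ℕ} (S : Finset (MIdx n k)) (a b : Coeffs n m Q k) : ℝ :=
  Gd (fun f g => Real.sqrt (∑ j, ∑ p ∈ S, (f j p - g j p) ^ 2)) a b

/-- `inf_{P ∈ 𝒫_k} ∫_{Ω ∩ B_ρ(x0)} G(u, P)^q`. -/
noncomputable def campInf {n m Q : ℕ} (k : ℕ) (Ω : Set (Euc n)) (u : Euc n → Fin Q → Euc m)
    (qe : ℝ) (x0 : Euc n) (ρ : ℝ) : ℝ :=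
  ⨅ a : Coeffs n m Q k, ∫ x in Ω ∩ ball x0 ρ, GG (u x) (evalQ x0 a x) ^ qe

/-- `Ω` is `A`-weighted: `H^n(Ω ∩ B_ρ(x)) ≥ A ρ^n` for all `x ∈ closure Ω`,
`0 < ρ ≤ diam Ω`. -/
def AWeighted {n : ℕ} (A : ℝ) (Ω : Set (Euc n)) : Prop :=
  ∀ x ∈ closure Ω, ∀ ρ : ℝ, 0 < ρ → ρ ≤ Metric.diam Ω →
    A * ρ ^ n ≤ (volume (Ω ∩ ball x ρ)).toReal

/-- `a` is an optimal degree-`≤ k` `Q`-valued polynomial approximation of `u`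
on `Ω ∩ B_ρ(x0)` in `L^q`. -/
def IsOptimalAt {n m Q : ℕ} (k : ℕ) (Ω : Set (Euc n)) (u : Euc n → Fin Q → Euc m)
    (qe : ℝ) (x0 : Euc n) (ρ : ℝ) (a : Coeffs n m Q k) : Prop :=
  ∀ b : Coeffs n m Q k,
    ∫ x in Ω ∩ ball x0 ρ, GG (u x) (evalQ x0 a x) ^ qe ≤
      ∫ x in Ω ∩ ball x0 ρ, GG (u x) (evalQ x0 b x) ^ qe

/-- `K` bounds the Campanato seminorm `|||u|||_{k,q,λ}` of `u` on `Ω`, i.e.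
`inf_{P ∈ 𝒫_k} ∫_{Ω ∩ B_ρ(x0)} G(u,P)^q ≤ K^q ρ^λ` for all admissible `x0, ρ`. -/
def CampBound {n m Q : ℕ} (k : ℕ) (Ω : Set (Euc n)) (u : Euc n → Fin Q → Euc m)
    (qe lam K : ℝ) : Prop :=
  ∀ x0 ∈ closure Ω, ∀ ρ : ℝ, 0 < ρ → ρ ≤ Metric.diam Ω →
    campInf k Ω u qe x0 ρ ≤ K ^ qe * ρ ^ lam

/-- Whitney-type description of `C^{k,α}` regularity of a `Q`-valued function on `S`,
with Hölder "seminorm" at most `L`: there is a family of Taylor coefficients whose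
zero-order part is the value, whose Taylor polynomials approximate to order `k+α`, and
whose top-order coefficients are `α`-Hölder in the `G`-distance. -/
def QCkHolder {n m Q : ℕ} (k : ℕ) (S : Set (Euc n)) (v : Euc n → Fin Q → Euc m)
    (α L : ℝ) : Prop :=
  ∃ a : Euc n → Coeffs n m Q k,
    (∀ x ∈ S, GG (v x) (evalQ x (a x) x) = 0) ∧
    (∀ x ∈ S, ∀ y ∈ S, GG (v y) (evalQ x (a x) y) ≤ L * dist y x ^ ((k : ℝ) + α)) ∧
    (∀ x ∈ S, ∀ y ∈ S,
      Gcoef (Finset.univ.filter fun p => mdeg p = k) (a x) (a y) ≤ L * dist x y ^ α)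


section SingleAux

open MvPolynomial in
lemma aux_measure_zero_pi : ∀ (n : ℕ) (f : MvPolynomial (Fin n) ℝ), f ≠ 0 →
    volume {x : Fin n → ℝ | MvPolynomial.eval x f = 0} = 0 := by
  intro n
  induction n with
  | zero =>
    intro f hf
    obtain ⟨r, rfl⟩ := MvPolynomial.C_surjective (Fin 0) f
    have hr : r ≠ 0 := fun h => hf (by simp [h])
    have : {x : Fin 0 → ℝ | MvPolynomial.eval x (C r) = 0} = ∅ := by
      ext x; simp [hr]
    rw [this]; exact measure_empty
  | succ n ih =>
    intro f hf
    set g := MvPolynomial.finSuccEquiv ℝ n f with hg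
    have hg0 : g ≠ 0 := by
      intro h
      apply hf
      have := (MvPolynomial.finSuccEquiv ℝ n).injective (a₁ := f) (a₂ := 0)
      simp only [map_zero] at this
      exact this h
    have hcoef : g.coeff g.natDegree ≠ 0 := Polynomial.leadingCoeff_ne_zero.mpr hg0
    have hmp := MeasureTheory.measurePreserving_piFinSuccAbove
      (fun _ : Fin (n+1) => (volume : Measure ℝ)) 0
    set S : Set (ℝ × (Fin n → ℝ)) :=
      {p | Polynomial.eval p.1 (g.map (MvPolynomial.eval p.2)) = 0} with hS
    have hcont : Continuous fun p : ℝ × (Fin n → ℝ) =>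
        Polynomial.eval p.1 (g.map (MvPolynomial.eval p.2)) := by
      have : ∀ p : ℝ × (Fin n → ℝ), Polynomial.eval p.1 (g.map (MvPolynomial.eval p.2)) =
          ∑ j ∈ Finset.range (g.natDegree + 1),
            MvPolynomial.eval p.2 (g.coeff j) * p.1 ^ j := by
        intro p
        rw [Polynomial.eval_map, Polynomial.eval₂_eq_sum_range]
      simp only [this]
      exact continuous_finset_sum _ fun j _ =>
        ((MvPolynomial.continuous_eval _).comp continuous_snd).mul
          ((continuous_fst.pow j))
    have hSm : MeasurableSet S := hcont.measurable (measurableSet_singleton 0)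
    have hpre : (MeasurableEquiv.piFinSuccAbove (fun _ : Fin (n+1) => ℝ) 0) ⁻¹' S =
        {x : Fin (n+1) → ℝ | MvPolynomial.eval x f = 0} := by
      ext x
      have hx0 : MvPolynomial.eval x f =
          Polynomial.eval (x 0) (g.map (MvPolynomial.eval (Fin.tail x))) := by
        rw [hg, ← MvPolynomial.eval_eq_eval_mv_eval', Fin.cons_self_tail]
      simp only [Set.mem_preimage, Set.mem_setOf_eq, hS, MeasurableEquiv.piFinSuccAbove_apply,
        Fin.insertNthEquiv_zero]
      rw [show ((Fin.consEquiv fun _ : Fin (n+1) => ℝ).symm x) = (x 0, Fin.tail x) from rfl]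
      rw [hx0]
    have hprod : (volume : Measure (ℝ × (Fin n → ℝ))) S = 0 := by
      rw [show (volume : Measure (ℝ × (Fin n → ℝ))) =
        (volume : Measure ℝ).prod (volume : Measure (Fin n → ℝ)) from rfl,
        MeasureTheory.Measure.prod_apply_symm hSm]
      have hae : ∀ᵐ y : Fin n → ℝ,
          (volume : Measure ℝ) ((fun x => (x, y)) ⁻¹' S) = 0 := by
        have h0 := ih (g.coeff g.natDegree) hcoef
        filter_upwards [(MeasureTheory.measure_eq_zero_iff_ae_notMem.mp h0)] with y hy
        have hq : g.map (MvPolynomial.eval y) ≠ 0 := by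
          intro h
          apply hy
          show MvPolynomial.eval y (g.coeff g.natDegree) = 0
          have := congrArg (fun q => Polynomial.coeff q g.natDegree) h
          simpa [Polynomial.coeff_map] using this
        have : ((fun x => (x, y)) ⁻¹' S) = {a : ℝ | (g.map (MvPolynomial.eval y)).IsRoot a} := by
          ext a; simp [hS, Polynomial.IsRoot]
        rw [this]
        exact (Polynomial.finite_setOf_isRoot hq).measure_zero _
      rw [MeasureTheory.lintegral_congr_ae hae]
      simp
    calc volume {x : Fin (n+1) → ℝ | MvPolynomial.eval x f = 0}
        = volume ((MeasurableEquiv.piFinSuccAbove (fun _ : Fin (n+1) => ℝ) 0) ⁻¹' S) := by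
          rw [hpre]
      _ = 0 := by
          rw [show (volume : Measure (Fin (n+1) → ℝ)) = Measure.pi fun _ => volume from rfl,
            hmp.measure_preimage hSm.nullMeasurableSet]
          exact hprod

variable {n k : ℕ}

def Pfun (c : MIdx n k → ℝ) (x : Euc n) : ℝ :=
  ∑ p : MIdx n k, c p * ∏ t, (x t) ^ ((p.1 t : ℕ))

lemma continuous_coord (t : Fin n) : Continuous fun x : Euc n => x t :=
  (continuous_apply t).comp (PiLp.continuous_ofLp (p := 2) (β := fun _ => ℝ))

lemma continuous_Pfun (c : MIdx n k → ℝ) : Continuous (Pfun c) := by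
  unfold Pfun
  exact continuous_finset_sum _ fun p _ => continuous_const.mul
    (continuous_finset_prod _ fun t _ => (continuous_coord t).pow _)

def mexp (p : MIdx n k) : Fin n →₀ ℕ :=
  Finsupp.equivFunOnFinite.symm fun t => (p.1 t : ℕ)

lemma mexp_inj : Function.Injective (mexp (n := n) (k := k)) := by
  intro p q h
  have h' : ∀ t, (p.1 t : ℕ) = (q.1 t : ℕ) := fun t => by
    have := congrArg (fun f => f t) (congrArg Finsupp.equivFunOnFinite h)
    simpa [mexp] using this
  exact Subtype.ext (funext fun t => Fin.ext (h' t))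

def mpoly (c : MIdx n k → ℝ) : MvPolynomial (Fin n) ℝ :=
  ∑ p : MIdx n k, MvPolynomial.monomial (mexp p) (c p)

lemma eval_mpoly (c : MIdx n k → ℝ) (y : Fin n → ℝ) :
    MvPolynomial.eval y (mpoly c) = ∑ p : MIdx n k, c p * ∏ t, (y t) ^ ((p.1 t : ℕ)) := by
  unfold mpoly
  rw [map_sum]
  refine Finset.sum_congr rfl fun p _ => ?_
  rw [MvPolynomial.eval_monomial]
  congr 1
  rw [Finsupp.prod_pow]
  refine Finset.prod_congr rfl fun t _ => ?_
  simp [mexp]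

lemma mpoly_ne_zero {c : MIdx n k → ℝ} (hc : c ≠ 0) : mpoly c ≠ 0 := by
  intro h
  apply hc
  funext p0
  have := congrArg (MvPolynomial.coeff (mexp p0)) h
  rw [mpoly] at this
  simp only [MvPolynomial.coeff_sum, MvPolynomial.coeff_monomial, MvPolynomial.coeff_zero] at this
  rw [Finset.sum_eq_single p0] at this
  · simpa using this
  · intro q _ hq
    rw [if_neg (fun he => hq (mexp_inj he))]
  · simp
lemma measure_zero_Pfun {c : MIdx n k → ℝ} (hc : c ≠ 0) :
    volume {x : Euc n | Pfun c x = 0} = 0 := by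
  have h0 := aux_measure_zero_pi n (mpoly c) (mpoly_ne_zero hc)
  have hmeas : MeasurableSet {y : Fin n → ℝ | MvPolynomial.eval y (mpoly c) = 0} :=
    (MvPolynomial.continuous_eval _).measurable (measurableSet_singleton 0)
  have hpre : (MeasurableEquiv.toLp 2 (Fin n → ℝ)).symm ⁻¹'
      {y : Fin n → ℝ | MvPolynomial.eval y (mpoly c) = 0} = {x : Euc n | Pfun c x = 0} := by
    ext x
    simp only [Set.mem_preimage, Set.mem_setOf_eq]
    rw [eval_mpoly]
    rfl
  calc volume {x : Euc n | Pfun c x = 0}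
      = volume ((MeasurableEquiv.toLp 2 (Fin n → ℝ)).symm ⁻¹'
          {y : Fin n → ℝ | MvPolynomial.eval y (mpoly c) = 0}) := by rw [hpre]
    _ = 0 := by
        rw [(EuclideanSpace.volume_preserving_symm_measurableEquiv_toLp (Fin n)).measure_preimage
          hmeas.nullMeasurableSet]
        exact h0
lemma coord_abs_le_norm (x : Euc n) (t : Fin n) : |x t| ≤ ‖x‖ := by
  rw [EuclideanSpace.norm_eq, ← Real.sqrt_sq_eq_abs]
  apply Real.sqrt_le_sqrt
  have := Finset.single_le_sum (f := fun i => ‖x i‖ ^ 2) (fun i _ => by positivity)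
    (Finset.mem_univ t)
  simpa [Real.norm_eq_abs, sq_abs] using this

lemma Pfun_diff_le {c c' : MIdx n k → ℝ} {x : Euc n} (hx : ‖x‖ ≤ 1) :
    |Pfun c x - Pfun c' x| ≤ (Fintype.card (MIdx n k) : ℝ) * ‖c - c'‖ := by
  have hxt : ∀ t : Fin n, |x t| ≤ 1 := fun t => (coord_abs_le_norm x t).trans hx
  rw [Pfun, Pfun, ← Finset.sum_sub_distrib]
  refine (Finset.abs_sum_le_sum_abs _ _).trans ?_
  have hterm : ∀ p : MIdx n k,
      |c p * ∏ t, (x t) ^ ((p.1 t : ℕ)) - c' p * ∏ t, (x t) ^ ((p.1 t : ℕ))| ≤ ‖c - c'‖ := by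
    intro p
    have h1 : |∏ t, (x t) ^ ((p.1 t : ℕ))| ≤ 1 := by
      rw [Finset.abs_prod]
      refine Finset.prod_le_one (fun t _ => abs_nonneg _) (fun t _ => ?_)
      rw [abs_pow]
      exact pow_le_one₀ (abs_nonneg _) (hxt t)
    calc |c p * ∏ t, (x t) ^ ((p.1 t : ℕ)) - c' p * ∏ t, (x t) ^ ((p.1 t : ℕ))|
        = |c p - c' p| * |∏ t, (x t) ^ ((p.1 t : ℕ))| := by rw [← sub_mul, abs_mul]
      _ ≤ ‖c - c'‖ * 1 := by
          refine mul_le_mul ?_ h1 (abs_nonneg _) (norm_nonneg _)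
          exact norm_le_pi_norm (c - c') p
      _ = ‖c - c'‖ := mul_one _
  refine (Finset.sum_le_sum fun p _ => hterm p).trans ?_
  rw [Finset.sum_const, nsmul_eq_mul]
  simp

/-- Key sublevel-set estimate via compactness. -/
lemma sublevel (n k : ℕ) (A : ℝ) (hA : 0 < A) :
    ∃ t : ℝ, 0 < t ∧ ∀ c : MIdx n k → ℝ, ‖c‖ = 1 →
      volume {x ∈ closedBall (0 : Euc n) 1 | |Pfun c x| ≤ t} ≤ ENNReal.ofReal (A / 2) := by
  by_contra hcon
  push_neg at hcon
  have hchoice : ∀ j : ℕ, ∃ c : MIdx n k → ℝ, ‖c‖ = 1 ∧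
      ENNReal.ofReal (A / 2) < volume {x ∈ closedBall (0 : Euc n) 1 |
        |Pfun c x| ≤ 1 / ((j : ℝ) + 1)} := by
    intro j
    obtain ⟨c, hc1, hc2⟩ := hcon (1 / ((j : ℝ) + 1)) (by positivity)
    exact ⟨c, hc1, hc2⟩
  choose c hc1 hc2 using hchoice
  have hmem : ∀ j, c j ∈ sphere (0 : MIdx n k → ℝ) 1 := fun j =>
    mem_sphere_zero_iff_norm.mpr (hc1 j)
  obtain ⟨c₀, hc₀s, φ, hφ, hlim⟩ :=
    (isCompact_sphere (0 : MIdx n k → ℝ) 1).tendsto_subseq hmem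
  have hc₀ : ‖c₀‖ = 1 := mem_sphere_zero_iff_norm.mp hc₀s
  have hc₀ne : c₀ ≠ 0 := fun h => by simp [h] at hc₀
  set M : ℝ := (Fintype.card (MIdx n k) : ℝ)
  -- for each ε > 0, vol of ε-sublevel of P_{c₀} is ≥ A/2
  have hKey : ∀ ε : ℝ, 0 < ε →
      ENNReal.ofReal (A / 2) ≤ volume {x ∈ closedBall (0 : Euc n) 1 | |Pfun c₀ x| ≤ ε} := by
    intro ε hε
    have h1 : Tendsto (fun j => 1 / ((φ j : ℝ) + 1) + M * ‖c (φ j) - c₀‖) atTop (𝓝 0) := by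
      have ha : Tendsto (fun j => 1 / ((φ j : ℝ) + 1)) atTop (𝓝 0) :=
        tendsto_one_div_add_atTop_nhds_zero_nat.comp hφ.tendsto_atTop
      have hb : Tendsto (fun j => ‖c (φ j) - c₀‖) atTop (𝓝 0) :=
        tendsto_iff_norm_sub_tendsto_zero.mp hlim
      have := ha.add (hb.const_mul M)
      simpa using this
    obtain ⟨j, hj⟩ := (h1.eventually_lt_const hε).exists
    have hsub : {x ∈ closedBall (0 : Euc n) 1 | |Pfun (c (φ j)) x| ≤ 1 / ((φ j : ℝ) + 1)} ⊆
        {x ∈ closedBall (0 : Euc n) 1 | |Pfun c₀ x| ≤ ε} := by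
      rintro x ⟨hxb, hxP⟩
      refine ⟨hxb, ?_⟩
      have hxn : ‖x‖ ≤ 1 := mem_closedBall_zero_iff.mp hxb
      calc |Pfun c₀ x| ≤ |Pfun (c (φ j)) x| + |Pfun c₀ x - Pfun (c (φ j)) x| := by
            have := abs_sub_abs_le_abs_sub (Pfun c₀ x) (Pfun (c (φ j)) x)
            linarith [abs_nonneg (Pfun c₀ x - Pfun (c (φ j)) x)]
        _ ≤ 1 / ((φ j : ℝ) + 1) + M * ‖c₀ - c (φ j)‖ :=
            add_le_add hxP (Pfun_diff_le hxn)
        _ = 1 / ((φ j : ℝ) + 1) + M * ‖c (φ j) - c₀‖ := by rw [norm_sub_rev]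
        _ ≤ ε := le_of_lt hj
    exact le_trans (le_of_lt (hc2 (φ j))) (measure_mono hsub)
  -- pass to the limit ε → 0
  set K : ℕ → Set (Euc n) := fun j => {x ∈ closedBall (0 : Euc n) 1 |
    |Pfun c₀ x| ≤ 1 / ((j : ℝ) + 1)} with hK
  have hKclosed : ∀ j, IsClosed (K j) := by
    intro j
    have : K j = closedBall (0 : Euc n) 1 ∩
        (fun x => |Pfun c₀ x|) ⁻¹' (Iic (1 / ((j : ℝ) + 1))) := by
      ext x; simp [hK, Set.mem_setOf_eq, Set.mem_inter_iff]
    rw [this]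
    exact isClosed_closedBall.inter (IsClosed.preimage
      (continuous_abs.comp (continuous_Pfun c₀)) isClosed_Iic)
  have hanti : Antitone K := by
    intro i j hij x hx
    obtain ⟨h1x, h2x⟩ := hx
    refine ⟨h1x, h2x.trans ?_⟩
    apply one_div_le_one_div_of_le (by positivity)
    have : (i : ℝ) ≤ (j : ℝ) := Nat.cast_le.mpr hij
    linarith
  have hfin : ∃ j, volume (K j) ≠ ⊤ := by
    refine ⟨0, ?_⟩
    have : K 0 ⊆ closedBall (0 : Euc n) 1 := fun x hx => hx.1
    exact ne_top_of_le_ne_top (measure_closedBall_lt_top).ne (measure_mono this)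
  have htend := tendsto_measure_iInter_atTop
    (fun j => (hKclosed j).measurableSet.nullMeasurableSet) hanti hfin
  have hlb : ENNReal.ofReal (A / 2) ≤ volume (⋂ j, K j) := by
    refine ge_of_tendsto' htend fun j => ?_
    exact hKey (1 / ((j : ℝ) + 1)) (by positivity)
  have hub : volume (⋂ j, K j) = 0 := by
    have hsub : (⋂ j, K j) ⊆ {x : Euc n | Pfun c₀ x = 0} := by
      intro x hx
      simp only [Set.mem_iInter] at hx
      have : |Pfun c₀ x| ≤ 0 := by
        by_contra hpos
        push_neg at hpos
        obtain ⟨j, hj⟩ := exists_nat_one_div_lt hpos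
        have := (hx j).2
        rw [show ((j : ℝ) + 1) = ((j : ℕ) + 1 : ℝ) by ring] at hj
        linarith
      exact abs_nonneg _ |>.antisymm' this |> abs_eq_zero.mp
    exact measure_mono_null hsub (measure_zero_Pfun hc₀ne)
  rw [hub] at hlb
  simp only [nonpos_iff_eq_zero, ENNReal.ofReal_eq_zero] at hlb
  linarith
lemma Pfun_smul (a : ℝ) (c : MIdx n k → ℝ) (x : Euc n) :
    Pfun (a • c) x = a * Pfun c x := by
  unfold Pfun
  rw [Finset.mul_sum]
  exact Finset.sum_congr rfl fun p _ => by simp [mul_assoc]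
end SingleAux

/-- single-valued key estimate (Campanato's Lemma 2.I).  If
`E ⊆ B_1(0) ⊆ ℝ^n` is measurable with `H^n(E) ≥ A > 0`, `P(x) = ∑_{|p| ≤ k} c_p x^p`,
and `|c_{p'}| ≥ δ` for some multi-index `p'`, then `∫_E |P|^q ≥ C(n,k,q,A) δ^q`. -/
theorem single_polynomial_lower_bound (n k : ℕ) (qe A : ℝ) (hq : 1 ≤ qe) (hA : 0 < A) :
    ∃ C : ℝ, 0 < C ∧
      ∀ (c : MIdx n k → ℝ) (E : Set (Euc n)),
        MeasurableSet E → E ⊆ ball (0 : Euc n) 1 → A ≤ (volume E).toReal →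
        ∀ (δ : ℝ) (p' : MIdx n k), 0 < δ → δ ≤ |c p'| →
          C * δ ^ qe ≤
            ∫ x in E, |∑ p : MIdx n k, c p * ∏ t, (x t) ^ ((p.1 t : ℕ))| ^ qe := by
  obtain ⟨t, ht, hT⟩ := sublevel n k A hA
  have hqe0 : (0 : ℝ) < qe := lt_of_lt_of_le one_pos hq
  refine ⟨(A / 2) * t ^ qe, mul_pos (by linarith) (Real.rpow_pos_of_pos ht qe), ?_⟩
  intro c E hmE hEb hEA δ p' hδ hδc
  have hgoal : (∫ x in E, |∑ p : MIdx n k, c p * ∏ t, (x t) ^ ((p.1 t : ℕ))| ^ qe) =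
      ∫ x in E, |Pfun c x| ^ qe := rfl
  rw [hgoal]
  have hrpow_cont : Continuous fun y : ℝ => y ^ qe :=
    continuous_iff_continuousAt.mpr fun y =>
      Real.continuousAt_rpow_const y qe (Or.inr (le_of_lt hqe0))
  -- normalize c
  have hcnorm : δ ≤ ‖c‖ := hδc.trans (by simpa [Real.norm_eq_abs] using norm_le_pi_norm c p')
  have hcpos : (0 : ℝ) < ‖c‖ := lt_of_lt_of_le hδ hcnorm
  set c' : MIdx n k → ℝ := ‖c‖⁻¹ • c with hc'
  have hc'norm : ‖c'‖ = 1 := by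
    rw [hc', norm_smul, norm_inv, norm_norm, inv_mul_cancel₀ (ne_of_gt hcpos)]
  have hPP : ∀ x : Euc n, Pfun c x = ‖c‖ * Pfun c' x := by
    intro x
    rw [hc', Pfun_smul, ← mul_assoc, mul_inv_cancel₀ (ne_of_gt hcpos), one_mul]
  -- the good set
  set S' : Set (Euc n) := E ∩ {x | t < |Pfun c' x|} with hS'
  have hmS' : MeasurableSet S' := hmE.inter
    (((continuous_abs.comp (continuous_Pfun c')).measurable) measurableSet_Ioi)
  have hEcb : E ⊆ closedBall (0 : Euc n) 1 := hEb.trans ball_subset_closedBall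
  -- measure estimate for S'
  have hdiff : E \ S' ⊆ {x ∈ closedBall (0 : Euc n) 1 | |Pfun c' x| ≤ t} := by
    rintro x ⟨hxE, hxn⟩
    refine ⟨hEcb hxE, ?_⟩
    by_contra hgt
    push_neg at hgt
    exact hxn ⟨hxE, hgt⟩
  have hEfin : volume E ≠ ⊤ :=
    ne_top_of_le_ne_top measure_closedBall_lt_top.ne (measure_mono hEcb)
  have hS'fin : volume S' ≠ ⊤ :=
    ne_top_of_le_ne_top hEfin (measure_mono inter_subset_left)
  have hDfin : volume (E \ S') ≠ ⊤ :=
    ne_top_of_le_ne_top hEfin (measure_mono diff_subset)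
  have hvol : A / 2 ≤ (volume S').toReal := by
    have h1 : volume E ≤ volume S' + volume (E \ S') := by
      have : E ⊆ S' ∪ (E \ S') := fun x hx => by
        by_cases hxs : x ∈ S'
        · exact Or.inl hxs
        · exact Or.inr ⟨hx, hxs⟩
      exact (measure_mono this).trans (measure_union_le _ _)
    have h2 : (volume (E \ S')).toReal ≤ A / 2 :=
      ENNReal.toReal_le_of_le_ofReal (by linarith)
        ((measure_mono hdiff).trans (hT c' hc'norm))
    have h3 : (volume E).toReal ≤ (volume S').toReal + (volume (E \ S')).toReal := by
      rw [← ENNReal.toReal_add hS'fin hDfin]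
      exact ENNReal.toReal_mono (by simp [ENNReal.add_ne_top, hS'fin, hDfin]) h1
    linarith
  -- integrand
  set f : Euc n → ℝ := fun x => |Pfun c x| ^ qe with hf
  have hfc : Continuous f := hrpow_cont.comp (continuous_abs.comp (continuous_Pfun c))
  have hInt : IntegrableOn f (closedBall (0 : Euc n) 1) :=
    hfc.continuousOn.integrableOn_compact (isCompact_closedBall 0 1)
  have hIntE : IntegrableOn f E := hInt.mono_set hEcb
  have hIntS' : IntegrableOn f S' := hIntE.mono_set inter_subset_left
  have hconst : (0:ℝ) ≤ (δ * t) ^ qe := Real.rpow_nonneg (by positivity) _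
  -- pointwise bound on S'
  have hpt : ∀ x ∈ S', (δ * t) ^ qe ≤ f x := by
    rintro x ⟨hxE, hxg⟩
    have hx1 : |Pfun c x| = ‖c‖ * |Pfun c' x| := by
      rw [hPP x, abs_mul, abs_of_nonneg (norm_nonneg _)]
    have hbase : δ * t ≤ |Pfun c x| := by
      rw [hx1]
      exact mul_le_mul hcnorm (le_of_lt hxg) (le_of_lt ht) (norm_nonneg _)
    exact Real.rpow_le_rpow (by positivity) hbase (le_of_lt hqe0)
  have step1 : ∫ x in S', (δ * t) ^ qe ≤ ∫ x in S', f x :=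
    setIntegral_mono_on (integrableOn_const hS'fin) hIntS' hmS' hpt
  have step2 : ∫ x in S', f x ≤ ∫ x in E, f x :=
    setIntegral_mono_set hIntE
      (Filter.Eventually.of_forall fun x => Real.rpow_nonneg (abs_nonneg _) _)
      (HasSubset.Subset.eventuallyLE inter_subset_left)
  have step0 : (A / 2) * t ^ qe * δ ^ qe ≤ ∫ x in S', (δ * t) ^ qe := by
    rw [setIntegral_const, smul_eq_mul, Real.mul_rpow (le_of_lt hδ) (le_of_lt ht)]
    have hnn : 0 ≤ δ ^ qe * t ^ qe :=
      mul_nonneg (Real.rpow_nonneg hδ.le _) (Real.rpow_nonneg ht.le _)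
    calc (A / 2) * t ^ qe * δ ^ qe = (A / 2) * (δ ^ qe * t ^ qe) := by ring
      _ ≤ (volume S').toReal * (δ ^ qe * t ^ qe) := mul_le_mul_of_nonneg_right hvol hnn
  calc (A / 2) * t ^ qe * δ ^ qe ≤ ∫ x in S', (δ * t) ^ qe := step0
    _ ≤ ∫ x in S', f x := step1
    _ ≤ ∫ x in E, f x := step2
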